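/- Let 𝒜 = {a,b,c,d}, let τ_G be the Grigorchuk substitution, and let ω^G be the explicitly defined sequence: writing m ≥ 1 as m = 2^k(2n+1) with k,n ≥ 0, ω^G(m) = a if k = 0, and for k ≥ 1, ω^G(m) = d, c, or b according as k ≡ 0, 1, or 2 (mod 3). Then for every integer j ≥ 0 the finite word τ_G^j(a) is a prefix of ω^G; that is, for every j ≥ 0 and every position 1 ≤ m ≤ length(τ_G^j(a)), the m-th letter of the word τ_G^j(a) equals ω^G(m). (Consequently ω^G is the fixed point of τ_G obtained as the limit of the words τ_G^j(a).) -/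

import Mathlib

inductive A : Type
  | a | b | c | d
  deriving DecidableEq

def tauL : A → List A
  | A.a => [A.a, A.c, A.a]
  | A.b => [A.d]
  | A.c => [A.b]
  | A.d => [A.c]

def tauW : List A → List A := fun w => w.flatMap tauL

def omegaG : ℕ → A := fun n =>
  if padicValNat 2 (n + 1) = 0 then A.a
  else if padicValNat 2 (n + 1) % 3 = 0 then A.d
  else if padicValNat 2 (n + 1) % 3 = 1 then A.c
  else A.b

/-- middle letter of level j -/
def mid : ℕ → A := fun j =>
  if j % 3 = 0 then A.c else if j % 3 = 1 then A.b else A.d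

lemma tauW_mid (j : ℕ) : tauW [mid j] = [mid (j + 1)] := by
  have h : j % 3 = 0 ∨ j % 3 = 1 ∨ j % 3 = 2 := by omega
  rcases h with h | h | h <;>
    · have h1 : (j + 1) % 3 = (j % 3 + 1) % 3 := by omega
      simp [mid, h, h1, tauW, tauL]

lemma tauW_append (u v : List A) : tauW (u ++ v) = tauW u ++ tauW v := by
  simp [tauW]

lemma tauW_iter_append (j : ℕ) (u v : List A) :
    tauW^[j] (u ++ v) = tauW^[j] u ++ tauW^[j] v := by
  induction j generalizing u v with
  | zero => rfl
  | succ j ih => simp [Function.iterate_succ_apply, tauW_append, ih]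

lemma tauW_iter_c (j : ℕ) : tauW^[j] [A.c] = [mid j] := by
  induction j with
  | zero => rfl
  | succ j ih => rw [Function.iterate_succ_apply', ih, tauW_mid]

lemma w_succ (j : ℕ) :
    tauW^[j+1] [A.a] = tauW^[j] [A.a] ++ mid j :: tauW^[j] [A.a] := by
  rw [Function.iterate_succ_apply]
  have : tauW [A.a] = [A.a] ++ [A.c] ++ [A.a] := rfl
  rw [this, tauW_iter_append, tauW_iter_append, tauW_iter_c]
  simp

lemma w_len (j : ℕ) : (tauW^[j] [A.a]).length = 2 ^ (j + 1) - 1 := by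
  induction j with
  | zero => rfl
  | succ j ih =>
    rw [w_succ]
    simp only [List.length_append, List.length_cons, ih]
    have : 1 ≤ 2 ^ (j + 1) := Nat.one_le_two_pow
    rw [pow_succ]
    omega

lemma val_add_pow (s t : ℕ) (ht : 0 < t) (hlt : t < 2 ^ s) :
    padicValNat 2 (t + 2 ^ s) = padicValNat 2 t := by
  haveI : Fact (Nat.Prime 2) := ⟨Nat.prime_two⟩
  set k := padicValNat 2 t with hk
  have hdvd : 2 ^ k ∣ t := pow_padicValNat_dvd
  have hks : k < s := by
    have h1 : 2 ^ k ≤ t := Nat.le_of_dvd ht hdvd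
    have := h1.trans_lt hlt
    exact (Nat.pow_lt_pow_iff_right (by norm_num)).mp this
  have hne : t + 2 ^ s ≠ 0 := by positivity
  apply le_antisymm
  · by_contra hc
    push_neg at hc
    have h1 : 2 ^ (k + 1) ∣ t + 2 ^ s :=
      (padicValNat_dvd_iff_le hne).mpr hc
    have h2 : 2 ^ (k + 1) ∣ 2 ^ s := pow_dvd_pow 2 hks
    have h3 : 2 ^ (k + 1) ∣ t := by
      have := Nat.dvd_sub h1 h2
      simpa using this
    exact pow_succ_padicValNat_not_dvd ht.ne' h3
  · apply (padicValNat_dvd_iff_le hne).mp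
    exact Nat.dvd_add hdvd (pow_dvd_pow 2 hks.le)

lemma w_succ' (j : ℕ) :
    tauW^[j+1] [A.a] = (tauW^[j] [A.a] ++ [mid j]) ++ tauW^[j] [A.a] := by
  rw [w_succ]; simp

lemma omegaG_mid (j : ℕ) : omegaG (2 ^ (j + 1) - 1) = mid j := by
  haveI : Fact (Nat.Prime 2) := ⟨Nat.prime_two⟩
  have h0 : 1 ≤ 2 ^ (j + 1) := Nat.one_le_two_pow
  have h1 : 2 ^ (j + 1) - 1 + 1 = 2 ^ (j + 1) := by omega
  have h2 : padicValNat 2 (2 ^ (j + 1)) = j + 1 := padicValNat.prime_pow (j + 1)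
  have h : j % 3 = 0 ∨ j % 3 = 1 ∨ j % 3 = 2 := by omega
  unfold omegaG
  rw [h1, h2]
  rcases h with h | h | h <;>
    · have h3 : (j + 1) % 3 = (j % 3 + 1) % 3 := by omega
      simp [mid, h, h3]

lemma omegaG_shift (j m : ℕ) (hm : m + 1 < 2 ^ (j + 1)) :
    omegaG (m + 2 ^ (j + 1)) = omegaG m := by
  unfold omegaG
  rw [show m + 2 ^ (j + 1) + 1 = (m + 1) + 2 ^ (j + 1) by ring,
    val_add_pow (j + 1) (m + 1) (by omega) hm]

theorem stmt3 (j m : ℕ) (h : m < (tauW^[j] [A.a]).length) :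
    (tauW^[j] [A.a])[m]'h = omegaG m := by
  induction j generalizing m with
  | zero =>
    simp only [Function.iterate_zero, id] at h ⊢
    obtain rfl : m = 0 := by simp at h; omega
    simp [omegaG, padicValNat.one]
  | succ j ih =>
    have hL : (tauW^[j] [A.a]).length = 2 ^ (j + 1) - 1 := w_len j
    have h0 : 1 ≤ 2 ^ (j + 1) := Nat.one_le_two_pow
    have hlen : m < ((tauW^[j] [A.a] ++ [mid j]) ++ tauW^[j] [A.a]).length := by
      rw [← w_succ']; exact h
    rw [List.getElem_of_eq (w_succ' j)]
    rcases lt_trichotomy m (tauW^[j] [A.a]).length with hm | hm | hm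
    · rw [List.getElem_append_left (by simp only [List.length_append, List.length_singleton]; omega)]
      rw [List.getElem_append_left hm]
      exact ih m hm
    · rw [List.getElem_append_left (by simp [hm]),
        List.getElem_append_right (le_of_eq hm.symm)]
      simp only [hm, Nat.sub_self, List.getElem_singleton]
      rw [hL, omegaG_mid]
    · have hge : (tauW^[j] [A.a] ++ [mid j]).length ≤ m := by
        simpa using hm
      rw [List.getElem_append_right hge]
      have hlt : m - (tauW^[j] [A.a] ++ [mid j]).length < (tauW^[j] [A.a]).length := by
        simp only [List.length_append, List.length_singleton]
        have := hlen
        simp only [List.length_append, List.length_singleton] at this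
        omega
      rw [ih _ hlt]
      have hmm : m - (tauW^[j] [A.a] ++ [mid j]).length = m - 2 ^ (j + 1) := by
        simp [hL]; omega
      rw [hmm]
      have h1 : m - 2 ^ (j + 1) + 1 < 2 ^ (j + 1) := by
        have := hlen
        simp only [List.length_append, List.length_singleton, hL] at this hm
        omega
      have h2 : m = (m - 2 ^ (j + 1)) + 2 ^ (j + 1) := by
        simp only [List.length_append, List.length_singleton, hL] at hm
        omega
      conv_rhs => rw [h2]
      rw [omegaG_shift _ _ h1]
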